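/- For two [m]-compositions c, c' of n, one has c ◁ c' in the refinement order if and only if Des(c) is a proper subset of Des(c') and g_c = g_{c'}. -/

import Mathlib

/-- The word of an `[m]`-composition: read the columns left to right, each
column from top row to bottom row, recording each row index `i` with
multiplicity the entry `col i`.  Its `j`-th letter is `g_c(j)`. -/
def wordOf (m : ℕ) (c : List (Fin m → ℕ)) : List (Fin m) :=
  c.flatMap fun col => (List.finRange m).flatMap fun i => List.replicate (col i) i

/-- The subnorm (descent set) `Des(c) = {|c_1|, |c_1|+|c_2|, …, ∑_{i<k}|c_i|}`. -/
def DesSet (m : ℕ) (c : List (Fin m → ℕ)) : Finset ℕ :=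
  (Finset.Ioo 0 c.length).image fun i => ((c.take i).map fun col => ∑ a, col a).sum

/-- `SplitCol col c1 c2`: the column `col` is broken at some row `j` with
`col j = a' + a''` (not both zero) into `c1 = (col 1,…,col (j-1), a', 0,…,0)`
and `c2 = (0,…,0, a'', col (j+1),…, col m)`. -/
def SplitCol (m : ℕ) (col c1 c2 : Fin m → ℕ) : Prop :=
  ∃ (j : Fin m) (a' a'' : ℕ), col j = a' + a'' ∧ (a' ≠ 0 ∨ a'' ≠ 0) ∧
    c1 j = a' ∧ c2 j = a'' ∧
    (∀ i, i < j → c1 i = col i ∧ c2 i = 0) ∧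
    (∀ i, j < i → c1 i = 0 ∧ c2 i = col i)

/-- The covering relation `c < c'` on `[m]`-compositions: `c'` is obtained from
`c` by breaking one column into two consecutive (nonzero) columns. -/
def SplitRel (m : ℕ) (c c' : List (Fin m → ℕ)) : Prop :=
  ∃ (l r : List (Fin m → ℕ)) (col c1 c2 : Fin m → ℕ),
    SplitCol m col c1 c2 ∧ c1 ≠ 0 ∧ c2 ≠ 0 ∧
      c = l ++ col :: r ∧ c' = l ++ c1 :: c2 :: r


variable {m : ℕ}

/-- The word of a single column. -/
def colWord (m : ℕ) (col : Fin m → ℕ) : List (Fin m) :=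
  (List.finRange m).flatMap fun i => List.replicate (col i) i


lemma wordOf_eq (c : List (Fin m → ℕ)) : wordOf m c = c.flatMap (colWord m) := rfl

lemma count_flatMap_replicate (col : Fin m → ℕ) (x : Fin m) :
    ∀ l : List (Fin m), l.Nodup →
      ((l.flatMap fun i => List.replicate (col i) i).count x) = if x ∈ l then col x else 0 := by
  intro l
  induction l with
  | nil => simp
  | cons a t ih =>
    intro hnd
    rw [List.nodup_cons] at hnd
    rw [List.flatMap_cons, List.count_append, ih hnd.2, List.count_replicate]
    by_cases hxa : x = a
    · subst hxa
      simp [hnd.1]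
    · simp [hxa, Ne.symm hxa]

lemma count_colWord (col : Fin m → ℕ) (x : Fin m) : (colWord m col).count x = col x := by
  rw [colWord, count_flatMap_replicate col x _ (List.nodup_finRange m)]
  simp

lemma sorted_flatMap_replicate (col : Fin m → ℕ) :
    ∀ l : List (Fin m), l.Pairwise (· < ·) →
      ((l.flatMap fun i => List.replicate (col i) i)).Pairwise (· ≤ ·) := by
  intro l
  induction l with
  | nil => simp
  | cons a t ih =>
    intro hs
    rw [List.pairwise_cons] at hs
    rw [List.flatMap_cons]
    rw [List.pairwise_append]
    refine ⟨List.pairwise_replicate.2 (Or.inr le_rfl), ih hs.2, ?_⟩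
    intro x hx y hy
    rw [List.eq_of_mem_replicate hx]
    obtain ⟨b, hb, hyb⟩ := List.mem_flatMap.1 hy
    rw [List.eq_of_mem_replicate hyb]
    exact (hs.1 b hb).le

lemma sorted_colWord (col : Fin m → ℕ) : (colWord m col).Pairwise (· ≤ ·) :=
  sorted_flatMap_replicate col _ ((List.pairwise_lt_finRange m))

lemma colWord_injective {col col' : Fin m → ℕ} (h : colWord m col = colWord m col') :
    col = col' := by
  funext i
  rw [← count_colWord col i, ← count_colWord col' i, h]

lemma eq_colWord_of_sorted {w : List (Fin m)} (hw : w.Pairwise (· ≤ ·)) :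
    w = colWord m (fun i => w.count i) := by
  refine List.Perm.eq_of_pairwise' hw (sorted_colWord _) ?_
  rw [List.perm_iff_count]
  intro a
  rw [count_colWord]

lemma mem_colWord {col : Fin m → ℕ} {x : Fin m} : x ∈ colWord m col ↔ col x ≠ 0 := by
  rw [← List.count_pos_iff, count_colWord]
  omega

lemma length_colWord (col : Fin m → ℕ) : (colWord m col).length = ∑ a, col a := by
  rw [colWord, List.length_flatMap, Fin.sum_univ_def]
  congr 1
  simp

lemma sum_count_eq_length (w : List (Fin m)) : ∑ i, w.count i = w.length := by
  induction w with
  | nil => simp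
  | cons a t ih =>
    simp only [List.count_cons, List.length_cons, ← ih, Finset.sum_add_distrib]
    congr 1
    simp

lemma ne_zero_iff_sum_pos {col : Fin m → ℕ} : col ≠ 0 ↔ 0 < ∑ a, col a := by
  rw [Function.ne_iff]
  constructor
  · rintro ⟨i, hi⟩
    exact Finset.sum_pos' (fun _ _ => Nat.zero_le _) ⟨i, Finset.mem_univ i, by simpa using Nat.pos_of_ne_zero hi⟩
  · intro h
    by_contra hall
    push_neg at hall
    simp only [Pi.zero_apply] at hall
    simp [Finset.sum_congr rfl (fun i _ => hall i)] at h

/-- partial sums of column weights -/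
def psum (c : List (Fin m → ℕ)) (i : ℕ) : ℕ := ((c.take i).map fun col => ∑ a, col a).sum

lemma mem_desSet {c : List (Fin m → ℕ)} {x : ℕ} :
    x ∈ DesSet m c ↔ ∃ i, 0 < i ∧ i < c.length ∧ psum c i = x := by
  simp only [DesSet, Finset.mem_image, Finset.mem_Ioo, psum]
  constructor
  · rintro ⟨i, ⟨h1, h2⟩, h3⟩; exact ⟨i, h1, h2, h3⟩
  · rintro ⟨i, h1, h2, h3⟩; exact ⟨i, ⟨h1, h2⟩, h3⟩

lemma psum_zero (c : List (Fin m → ℕ)) : psum c 0 = 0 := by simp [psum]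

lemma psum_nil (i : ℕ) : psum ([] : List (Fin m → ℕ)) i = 0 := by simp [psum]

lemma psum_cons (col : Fin m → ℕ) (r : List (Fin m → ℕ)) (t : ℕ) :
    psum (col :: r) (t + 1) = (∑ a, col a) + psum r t := by
  simp [psum, List.take_succ_cons]

lemma psum_add (c : List (Fin m → ℕ)) (i t : ℕ) :
    psum c (i + t) = psum c i + (((c.drop i).take t).map fun col => ∑ a, col a).sum := by
  simp [psum, List.take_add]

lemma psum_le_psum (c : List (Fin m → ℕ)) {i j : ℕ} (h : i ≤ j) : psum c i ≤ psum c j := by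
  obtain ⟨t, rfl⟩ := Nat.le.dest h
  rw [psum_add]
  exact Nat.le_add_right _ _

lemma psum_lt_psum {c : List (Fin m → ℕ)} (hc : ∀ col ∈ c, col ≠ 0) {i j : ℕ}
    (hij : i < j) (hj : j ≤ c.length) : psum c i < psum c j := by
  obtain ⟨t, rfl⟩ := Nat.le.dest hij.le
  rw [psum_add]
  have ht : 0 < t := by omega
  have hlen : 0 < ((c.drop i).take t).length := by
    rw [List.length_take, List.length_drop]
    omega
  obtain ⟨col, hcol⟩ := List.exists_mem_of_length_pos hlen
  have hmem : col ∈ c := List.mem_of_mem_drop (List.mem_of_mem_take hcol)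
  have hpos : 0 < ∑ a, col a := by
    have := hc col hmem
    rw [Function.ne_iff] at this
    obtain ⟨a, ha⟩ := this
    exact Finset.sum_pos' (fun _ _ => Nat.zero_le _) ⟨a, Finset.mem_univ a, by simpa using Nat.pos_of_ne_zero ha⟩
  have hle : (∑ a, col a) ≤ (((c.drop i).take t).map fun col => ∑ a, col a).sum := by
    apply List.le_sum_of_mem
    apply List.mem_map_of_mem
    exact hcol
  exact Nat.lt_add_of_pos_right (lt_of_lt_of_le hpos hle)
lemma psum_length (c : List (Fin m → ℕ)) : psum c c.length = (wordOf m c).length := by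
  rw [wordOf_eq, List.length_flatMap, psum, List.take_length]
  congr 1
  apply List.map_congr_left
  intro col _
  simp [Function.comp, length_colWord]

lemma desSet_pos {c : List (Fin m → ℕ)} (hc : ∀ col ∈ c, col ≠ 0) {y : ℕ}
    (hy : y ∈ DesSet m c) : 0 < y ∧ y < (wordOf m c).length := by
  obtain ⟨i, h1, h2, rfl⟩ := mem_desSet.1 hy
  constructor
  · have := psum_lt_psum hc h1 h2.le
    rw [psum_zero] at this
    omega
  · rw [← psum_length]
    exact psum_lt_psum hc h2 le_rfl

lemma desSet_nil : DesSet m [] = ∅ := by simp [DesSet]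

lemma desSet_singleton (col : Fin m → ℕ) : DesSet m [col] = ∅ := by
  simp [DesSet]
  decide

lemma desSet_cons (col : Fin m → ℕ) {d : List (Fin m → ℕ)} (hd : d ≠ []) :
    DesSet m (col :: d) = insert (∑ a, col a) ((DesSet m d).image fun y => (∑ a, col a) + y) := by
  ext y
  rw [mem_desSet, Finset.mem_insert, Finset.mem_image]
  constructor
  · rintro ⟨i, h1, h2, rfl⟩
    obtain ⟨t, rfl⟩ : ∃ t, i = t + 1 := ⟨i - 1, by omega⟩
    rw [psum_cons]
    rcases Nat.eq_zero_or_pos t with rfl | ht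
    · left; rw [psum_zero]; omega
    · right
      refine ⟨psum d t, mem_desSet.2 ⟨t, ht, ?_, rfl⟩, rfl⟩
      simp at h2; omega
  · rintro (rfl | ⟨z, hz, rfl⟩)
    · refine ⟨1, one_pos, ?_, ?_⟩
      · simp
        exact List.length_pos_iff.2 hd
      · rw [psum_cons, psum_zero]; omega
    · obtain ⟨t, h1, h2, rfl⟩ := mem_desSet.1 hz
      exact ⟨t + 1, by omega, by simp; omega, (psum_cons col d t)⟩

lemma wordOf_nil_iff {c : List (Fin m → ℕ)} (hc : ∀ col ∈ c, col ≠ 0) :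
    wordOf m c = [] ↔ c = [] := by
  constructor
  · intro h
    cases c with
    | nil => rfl
    | cons col r =>
      rw [wordOf_eq, List.flatMap_cons, List.append_eq_nil_iff] at h
      have : col ≠ 0 := hc col List.mem_cons_self
      rw [ne_zero_iff_sum_pos] at this
      have hl := length_colWord col
      rw [h.1] at hl
      simp at hl
      omega
  · rintro rfl; rfl



lemma splitCol_add {col c1 c2 : Fin m → ℕ} (h : SplitCol m col c1 c2) (i : Fin m) :
    c1 i + c2 i = col i := by
  obtain ⟨j, a', a'', hj, -, h1, h2, hlt, hgt⟩ := h
  rcases lt_trichotomy i j with hij | rfl | hij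
  · obtain ⟨e1, e2⟩ := hlt i hij; omega
  · omega
  · obtain ⟨e1, e2⟩ := hgt i hij; omega

lemma splitCol_word {col c1 c2 : Fin m → ℕ} (h : SplitCol m col c1 c2) :
    colWord m c1 ++ colWord m c2 = colWord m col := by
  have hadd := splitCol_add h
  obtain ⟨j, a', a'', hj, hne, h1, h2, hlt, hgt⟩ := h
  have hs : (colWord m c1 ++ colWord m c2).Pairwise (· ≤ ·) := by
    rw [List.pairwise_append]
    refine ⟨sorted_colWord c1, sorted_colWord c2, ?_⟩
    intro x hx y hy
    rw [mem_colWord] at hx hy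
    have hxj : x ≤ j := by
      by_contra hcon; push_neg at hcon
      exact hx (hgt x hcon).1
    have hjy : j ≤ y := by
      by_contra hcon; push_neg at hcon
      exact hy (hlt y hcon).2
    exact le_trans hxj hjy
  have heq := eq_colWord_of_sorted hs
  rw [heq]
  congr 1
  funext i
  rw [List.count_append, count_colWord, count_colWord, hadd]

lemma psum_append_le {l u : List (Fin m → ℕ)} {i : ℕ} (h : i ≤ l.length) :
    psum (l ++ u) i = psum l i := by
  rw [psum, List.take_append_of_le_length h]; rfl

lemma psum_append (l u : List (Fin m → ℕ)) (t : ℕ) :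
    psum (l ++ u) (l.length + t) = psum l l.length + psum u t := by
  simp [psum, List.take_append, List.take_length]
  rw [List.take_of_length_le (by simp)]

lemma splitRel_forward {l r : List (Fin m → ℕ)} {col c1 c2 : Fin m → ℕ}
    (hsp : SplitCol m col c1 c2) (h1 : c1 ≠ 0) (h2 : c2 ≠ 0)
    (hc : ∀ d ∈ l ++ col :: r, d ≠ 0) :
    wordOf m (l ++ c1 :: c2 :: r) = wordOf m (l ++ col :: r) ∧
    (∀ d ∈ l ++ c1 :: c2 :: r, d ≠ 0) ∧
    (psum l l.length + ∑ a, c1 a) ∉ DesSet m (l ++ col :: r) ∧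
    DesSet m (l ++ c1 :: c2 :: r) =
      insert (psum l l.length + ∑ a, c1 a) (DesSet m (l ++ col :: r)) := by
  have hword : wordOf m (l ++ c1 :: c2 :: r) = wordOf m (l ++ col :: r) := by
    simp only [wordOf_eq, List.flatMap_append, List.flatMap_cons]
    congr 1
    rw [← List.append_assoc, splitCol_word hsp]
  have hnz : ∀ d ∈ l ++ c1 :: c2 :: r, d ≠ 0 := by
    intro d hd
    rcases List.mem_append.1 hd with hd | hd
    · exact hc d (List.mem_append.2 (Or.inl hd))
    · rcases hd with _ | ⟨_, hd⟩
      · exact h1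
      rcases hd with _ | ⟨_, hd⟩
      · exact h2
      · exact hc d (List.mem_append.2 (Or.inr (List.mem_cons_of_mem _ hd)))
  set A := psum l l.length with hA
  set w1 := ∑ a, c1 a with hw1def
  set w2 := ∑ a, c2 a with hw2def
  have hw1 : 0 < w1 := ne_zero_iff_sum_pos.1 h1
  have hw2 : 0 < w2 := ne_zero_iff_sum_pos.1 h2
  have hwcol : ∑ a, col a = w1 + w2 := by
    rw [hw1def, hw2def, ← Finset.sum_add_distrib]
    exact (Finset.sum_congr rfl fun i _ => (splitCol_add hsp i).symm)
  have hL : (l ++ col :: r).length = l.length + 1 + r.length := by simp; omega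
  have hL' : (l ++ c1 :: c2 :: r).length = l.length + 2 + r.length := by simp; omega
  have hpsum1 : ∀ t, psum (l ++ col :: r) (l.length + (t + 1)) = A + ((w1 + w2) + psum r t) := by
    intro t
    rw [psum_append, psum_cons, hwcol]
  have hpsum2 : ∀ t, psum (l ++ c1 :: c2 :: r) (l.length + (t + 2)) = A + (w1 + (w2 + psum r t)) := by
    intro t
    rw [psum_append]
    show A + psum (c1 :: c2 :: r) (t + 1 + 1) = _
    rw [psum_cons, psum_cons]
  have hx1 : psum (l ++ c1 :: c2 :: r) (l.length + 1) = A + w1 := by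
    rw [psum_append]
    show A + psum (c1 :: c2 :: r) (0 + 1) = _
    rw [psum_cons, psum_zero, Nat.add_zero, hw1def]
  have hnotmem : A + w1 ∉ DesSet m (l ++ col :: r) := by
    rw [mem_desSet]
    rintro ⟨i, hi0, hilen, hieq⟩
    rw [hL] at hilen
    rcases le_or_gt i l.length with hi | hi
    · rw [psum_append_le hi] at hieq
      have := psum_le_psum l hi
      omega
    · obtain ⟨t, rfl⟩ : ∃ t, i = l.length + (t + 1) := ⟨i - l.length - 1, by omega⟩
      rw [hpsum1 t] at hieq
      omega
  refine ⟨hword, hnz, hnotmem, ?_⟩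
  ext y
  rw [Finset.mem_insert, mem_desSet, mem_desSet]
  constructor
  · rintro ⟨i, hi0, hilen, rfl⟩
    rw [hL'] at hilen
    rcases le_or_gt i l.length with hi | hi
    · right
      refine ⟨i, hi0, by omega, ?_⟩
      rw [psum_append_le hi, psum_append_le hi]
    · rcases Nat.eq_or_lt_of_le hi with rfl | hi2
      · left
        exact hx1
      · right
        obtain ⟨t, rfl⟩ : ∃ t, i = l.length + (t + 2) := ⟨i - l.length - 2, by omega⟩
        refine ⟨l.length + (t + 1), by omega, by omega, ?_⟩
        rw [hpsum1 t, hpsum2 t]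
        omega
  · rintro (rfl | ⟨i, hi0, hilen, rfl⟩)
    · exact ⟨l.length + 1, by omega, by omega, hx1⟩
    · rw [hL] at hilen
      rcases le_or_gt i l.length with hi | hi
      · refine ⟨i, hi0, by omega, ?_⟩
        rw [psum_append_le hi, psum_append_le hi]
      · obtain ⟨t, rfl⟩ : ∃ t, i = l.length + (t + 1) := ⟨i - l.length - 1, by omega⟩
        refine ⟨l.length + (t + 2), by omega, by omega, ?_⟩
        rw [hpsum1 t, hpsum2 t]
        omega

lemma splitCol_exists (col : Fin m → ℕ) (s : ℕ) (hs0 : 0 < s) (hs : s < ∑ a, col a) :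
    ∃ c1 c2, SplitCol m col c1 c2 ∧ c1 ≠ 0 ∧ c2 ≠ 0 ∧ ∑ a, c1 a = s := by
  set w := colWord m col with hw
  have hwlen : w.length = ∑ a, col a := length_colWord col
  have hslen : s < w.length := by omega
  have hs1 : s - 1 < w.length := by omega
  set c1 : Fin m → ℕ := fun i => (w.take s).count i with hc1
  set c2 : Fin m → ℕ := fun i => (w.drop s).count i with hc2
  set j : Fin m := w[s-1] with hj
  have hsorted : ∀ (p q : ℕ) (hp : p < w.length) (hq : q < w.length), p ≤ q → w[p] ≤ w[q] := by
    intro p q hp hq hpq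
    rcases Nat.eq_or_lt_of_le hpq with rfl | hlt
    · exact le_rfl
    · have := List.pairwise_iff_get.1 (sorted_colWord col) ⟨p, hp⟩ ⟨q, hq⟩ hlt
      simpa using this
  have hcount : ∀ i, c1 i + c2 i = col i := by
    intro i
    rw [hc1, hc2, ← List.count_append, List.take_append_drop, hw, count_colWord]
  have hmem_take : ∀ i : Fin m, i ∈ w.take s → i ≤ j := by
    intro i hi
    rw [List.mem_take_iff_getElem] at hi
    obtain ⟨p, hp, rfl⟩ := hi
    rw [lt_min_iff] at hp
    exact hsorted p (s-1) (by omega) hs1 (by omega)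
  have hmem_drop : ∀ i : Fin m, i ∈ w.drop s → j ≤ i := by
    intro i hi
    rw [List.mem_iff_getElem] at hi
    obtain ⟨p, hp, rfl⟩ := hi
    rw [List.getElem_drop]
    have : s + p < w.length := by
      rw [List.length_drop] at hp; omega
    exact hsorted (s-1) (s+p) hs1 this (by omega)
  have hjtake : j ∈ w.take s := by
    rw [List.mem_take_iff_getElem]
    refine ⟨s - 1, by rw [lt_min_iff]; omega, ?_⟩
    exact hj.symm
  have hc1j : 0 < c1 j := by
    rw [hc1]
    exact List.count_pos_iff.2 hjtake
  have hc2ne : ∃ i, 0 < c2 i := by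
    refine ⟨w[s], ?_⟩
    rw [hc2]
    apply List.count_pos_iff.2
    rw [List.mem_iff_getElem]
    refine ⟨0, ?_, ?_⟩
    · rw [List.length_drop]; omega
    · rw [List.getElem_drop]
      simp
  have hlt : ∀ i, i < j → c1 i = col i ∧ c2 i = 0 := by
    intro i hij
    have h2 : c2 i = 0 := by
      rw [hc2, List.count_eq_zero]
      intro hmem
      exact absurd (hmem_drop i hmem) (by exact not_le.2 hij)
    have := hcount i
    exact ⟨by omega, h2⟩
  have hgt : ∀ i, j < i → c1 i = 0 ∧ c2 i = col i := by
    intro i hij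
    have h1 : c1 i = 0 := by
      rw [hc1, List.count_eq_zero]
      intro hmem
      exact absurd (hmem_take i hmem) (by exact not_le.2 hij)
    have := hcount i
    exact ⟨h1, by omega⟩
  have hsum1 : ∑ a, c1 a = s := by
    rw [hc1]
    rw [sum_count_eq_length (w.take s), List.length_take]
    omega
  refine ⟨c1, c2, ⟨j, c1 j, c2 j, (hcount j).symm, Or.inl (by omega), rfl, rfl, hlt, hgt⟩, ?_, ?_, hsum1⟩
  · rw [Function.ne_iff]; exact ⟨j, by simp; omega⟩
  · rw [Function.ne_iff]
    obtain ⟨i, hi⟩ := hc2ne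
    exact ⟨i, by simp; omega⟩

lemma wordOf_cons (col : Fin m → ℕ) (r : List (Fin m → ℕ)) :
    wordOf m (col :: r) = colWord m col ++ wordOf m r := by
  rw [wordOf_eq, List.flatMap_cons, wordOf_eq]

lemma exists_split :
    ∀ c : List (Fin m → ℕ), (∀ col ∈ c, col ≠ 0) → ∀ x, 0 < x →
      x < (wordOf m c).length → x ∉ DesSet m c →
      ∃ c'', SplitRel m c c'' ∧ (∀ col ∈ c'', col ≠ 0) ∧
        wordOf m c'' = wordOf m c ∧ DesSet m c'' = insert x (DesSet m c) := by
  intro c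
  induction c with
  | nil => intro _ x hx0 hxlen _; simp [wordOf_eq] at hxlen
  | cons col rest ih =>
    intro hc x hx0 hxlen hxdes
    have hcol : col ≠ 0 := hc col List.mem_cons_self
    set w0 := ∑ a, col a with hw0def
    have hw0 : 0 < w0 := ne_zero_iff_sum_pos.1 hcol
    have hlen : (wordOf m (col :: rest)).length = w0 + (wordOf m rest).length := by
      rw [wordOf_cons, List.length_append, length_colWord]
    rcases lt_trichotomy x w0 with hx | hx | hx
    · -- split the first column
      obtain ⟨c1, c2, hsp, h1, h2, hsum⟩ := splitCol_exists col x hx0 hx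
      have hfwd := splitRel_forward (l := []) (r := rest) hsp h1 h2 (by simpa using hc)
      refine ⟨c1 :: c2 :: rest, ⟨[], rest, col, c1, c2, hsp, h1, h2, rfl, rfl⟩, ?_, ?_, ?_⟩
      · simpa using hfwd.2.1
      · simpa using hfwd.1
      · have := hfwd.2.2.2
        simp only [List.nil_append] at this
        rw [this, psum_nil, hsum, Nat.zero_add]
    · -- x = w0 : contradiction
      exfalso
      by_cases hrest : rest = []
      · subst hrest
        simp [wordOf_cons, wordOf_eq, length_colWord] at hxlen
        omega
      · apply hxdes
        rw [mem_desSet]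
        refine ⟨1, one_pos, ?_, ?_⟩
        · simp
          exact List.length_pos_iff.2 hrest
        · show psum (col :: rest) (0 + 1) = x
          rw [psum_cons, psum_zero]
          omega
    · -- recurse
      have hrest_ne : rest ≠ [] := by
        intro h
        subst h
        simp [wordOf_cons, wordOf_eq, length_colWord] at hxlen
        omega
      have hcrest : ∀ d ∈ rest, d ≠ 0 := fun d hd => hc d (List.mem_cons_of_mem _ hd)
      have hxr : x - w0 ∉ DesSet m rest := by
        intro hmem
        apply hxdes
        rw [desSet_cons col hrest_ne]
        refine Finset.mem_insert_of_mem (Finset.mem_image.2 ⟨x - w0, hmem, by omega⟩)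
      obtain ⟨rest'', hrel, hnz, hword, hdes⟩ :=
        ih hcrest (x - w0) (by omega) (by omega) hxr
      have hrest''_ne : rest'' ≠ [] := by
        intro h
        subst h
        rw [desSet_nil] at hdes
        exact absurd hdes.symm (by simp)
      obtain ⟨l', r', col0, c1, c2, hsp, h1, h2, he1, he2⟩ := hrel
      refine ⟨col :: rest'', ⟨col :: l', r', col0, c1, c2, hsp, h1, h2, by rw [he1]; rfl,
        by rw [he2]; rfl⟩, ?_, ?_, ?_⟩
      · intro d hd
        rcases hd with _ | ⟨_, hd⟩
        · exact hcol
        · exact hnz d hd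
      · rw [wordOf_cons, wordOf_cons, hword]
      · rw [desSet_cons col hrest''_ne, desSet_cons col hrest_ne, hdes, Finset.image_insert]
        have : w0 + (x - w0) = x := by omega
        rw [this, Finset.insert_comm]

lemma word_des_injective :
    ∀ c c' : List (Fin m → ℕ), (∀ col ∈ c, col ≠ 0) → (∀ col ∈ c', col ≠ 0) →
      wordOf m c = wordOf m c' → DesSet m c = DesSet m c' → c = c' := by
  intro c
  induction c with
  | nil =>
    intro c' _ hc' hw _
    symm
    exact (wordOf_nil_iff hc').1 (by rw [← hw]; rfl)
  | cons col rest ih =>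
    intro c' hc hc' hw hdes
    cases c' with
    | nil => exact absurd ((wordOf_nil_iff hc).1 (by rw [hw]; rfl)) (by simp)
    | cons col' rest' =>
      have hcol : col ≠ 0 := hc col List.mem_cons_self
      have hcol' : col' ≠ 0 := hc' col' List.mem_cons_self
      have hcrest : ∀ d ∈ rest, d ≠ 0 := fun d hd => hc d (List.mem_cons_of_mem _ hd)
      have hcrest' : ∀ d ∈ rest', d ≠ 0 := fun d hd => hc' d (List.mem_cons_of_mem _ hd)
      by_cases hr : rest = [] <;> by_cases hr' : rest' = []
      · subst hr; subst hr'
        rw [wordOf_cons, wordOf_cons] at hw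
        simp only [wordOf_eq, List.flatMap_nil, List.append_nil] at hw
        rw [colWord_injective hw]
      · exfalso
        subst hr
        rw [desSet_singleton, desSet_cons col' hr'] at hdes
        exact absurd hdes.symm (by simp)
      · exfalso
        subst hr'
        rw [desSet_singleton, desSet_cons col hr] at hdes
        exact absurd hdes (by simp)
      · -- both nonempty
        have hpos : ∀ y ∈ DesSet m rest, 0 < y := fun y hy => (desSet_pos hcrest hy).1
        have hpos' : ∀ y ∈ DesSet m rest', 0 < y := fun y hy => (desSet_pos hcrest' hy).1
        set w0 := ∑ a, col a with hw0
        set w0' := ∑ a, col' a with hw0'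
        have hle : ∀ (u : Fin m → ℕ) (d : List (Fin m → ℕ)) (hd : d ≠ [])
            (hposd : ∀ y ∈ DesSet m d, 0 < y) (z : ℕ),
            z ∈ DesSet m (u :: d) → (∑ a, u a) ≤ z := by
          intro u d hd hposd z hz
          rw [desSet_cons u hd] at hz
          rcases Finset.mem_insert.1 hz with rfl | hz
          · exact le_rfl
          · obtain ⟨y, hy, rfl⟩ := Finset.mem_image.1 hz
            have := hposd y hy
            omega
        have hmem : w0 ∈ DesSet m (col' :: rest') := by
          rw [← hdes, desSet_cons col hr]
          exact Finset.mem_insert_self _ _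
        have hmem' : w0' ∈ DesSet m (col :: rest) := by
          rw [hdes, desSet_cons col' hr']
          exact Finset.mem_insert_self _ _
        have hww : w0 = w0' := by
          have a1 := hle col' rest' hr' hpos' _ hmem
          have a2 := hle col rest hr hpos _ hmem'
          omega
        rw [wordOf_cons, wordOf_cons] at hw
        have hlencw : (colWord m col).length = (colWord m col').length := by
          rw [length_colWord, length_colWord, ← hw0, ← hw0', hww]
        obtain ⟨hcw, hwrest⟩ := List.append_inj hw hlencw
        have hcc : col = col' := colWord_injective hcw
        have hdes' : DesSet m rest = DesSet m rest' := by
          rw [desSet_cons col hr, desSet_cons col' hr', ← hcc, ← hw0] at hdes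
          have himg : (DesSet m rest).image (fun y => w0 + y) =
              (DesSet m rest').image (fun y => w0 + y) := by
            ext z
            constructor
            · intro hz
              obtain ⟨y, hy, rfl⟩ := Finset.mem_image.1 hz
              have hzne : w0 + y ≠ w0 := by have := hpos y hy; omega
              have : w0 + y ∈ insert w0 ((DesSet m rest').image fun y => w0 + y) := by
                rw [← hdes]
                exact Finset.mem_insert_of_mem hz
              rcases Finset.mem_insert.1 this with h | h
              · exact absurd h hzne
              · exact h
            · intro hz
              obtain ⟨y, hy, rfl⟩ := Finset.mem_image.1 hz
              have hzne : w0 + y ≠ w0 := by have := hpos' y hy; omega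
              have : w0 + y ∈ insert w0 ((DesSet m rest).image fun y => w0 + y) := by
                rw [hdes]
                exact Finset.mem_insert_of_mem hz
              rcases Finset.mem_insert.1 this with h | h
              · exact absurd h hzne
              · exact h
          exact Finset.image_injective (fun a b hab => by omega) himg
        rw [hcc, ih rest' hcrest hcrest' hwrest hdes']

lemma splitRel_step {c c' : List (Fin m → ℕ)} (h : SplitRel m c c') (hc : ∀ d ∈ c, d ≠ 0) :
    wordOf m c' = wordOf m c ∧ (∀ d ∈ c', d ≠ 0) ∧ DesSet m c ⊂ DesSet m c' := by
  obtain ⟨l, r, col, c1, c2, hsp, h1, h2, rfl, rfl⟩ := h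
  obtain ⟨hw, hnz, hnot, hins⟩ := splitRel_forward hsp h1 h2 hc
  refine ⟨hw, hnz, ?_⟩
  rw [hins]
  exact Finset.ssubset_insert hnot

lemma transGen_forward {c c' : List (Fin m → ℕ)}
    (h : Relation.TransGen (SplitRel m) c c') (hc : ∀ d ∈ c, d ≠ 0) :
    wordOf m c = wordOf m c' ∧ (∀ d ∈ c', d ≠ 0) ∧ DesSet m c ⊂ DesSet m c' := by
  induction h with
  | single h =>
    obtain ⟨hw, hnz, hss⟩ := splitRel_step h hc
    exact ⟨hw.symm, hnz, hss⟩
  | tail hab hbc ih =>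
    obtain ⟨hw, hnz, hss⟩ := ih
    obtain ⟨hw2, hnz2, hss2⟩ := splitRel_step hbc hnz
    exact ⟨hw.trans hw2.symm, hnz2, hss.trans hss2⟩

lemma backward (c' : List (Fin m → ℕ)) (hc' : ∀ d ∈ c', d ≠ 0) :
    ∀ k, ∀ c, (∀ d ∈ c, d ≠ 0) → wordOf m c = wordOf m c' →
      DesSet m c ⊂ DesSet m c' → (DesSet m c' \ DesSet m c).card ≤ k →
      Relation.TransGen (SplitRel m) c c' := by
  intro k
  induction k with
  | zero =>
    intro c _ _ hss hcard
    exfalso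
    have hempty := Finset.card_eq_zero.1 (Nat.le_zero.1 hcard)
    rw [Finset.sdiff_eq_empty_iff_subset] at hempty
    exact hss.2 hempty
  | succ k ihk =>
    intro c hc hw hss hcard
    obtain ⟨x, hx', hx⟩ := Finset.exists_of_ssubset hss
    have hx0 : 0 < x := (desSet_pos hc' hx').1
    have hxlen : x < (wordOf m c).length := by rw [hw]; exact (desSet_pos hc' hx').2
    obtain ⟨c'', hrel, hnz, hword, hdes⟩ := exists_split c hc x hx0 hxlen hx
    have hsub : DesSet m c'' ⊆ DesSet m c' := by
      rw [hdes]
      exact Finset.insert_subset hx' hss.1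
    by_cases heq : DesSet m c'' = DesSet m c'
    · have hcc : c'' = c' := word_des_injective c'' c' hnz hc' (by rw [hword, hw]) heq
      exact Relation.TransGen.single (hcc ▸ hrel)
    · apply Relation.TransGen.head hrel
      apply ihk c'' hnz (by rw [hword, hw]) (Finset.ssubset_iff_subset_ne.2 ⟨hsub, heq⟩) ?_
      have hsd : DesSet m c' \ DesSet m c'' = (DesSet m c' \ DesSet m c).erase x := by
        rw [hdes]
        ext z
        simp only [Finset.mem_erase, Finset.mem_sdiff, Finset.mem_insert]
        tauto
      rw [hsd, Finset.card_erase_of_mem (Finset.mem_sdiff.2 ⟨hx', hx⟩)]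
      omega

/-- for two `[m]`-compositions `c, c'` of `n`, one has `c ◁ c'`
(the transitive closure of the column-splitting relation) if and only if
`Des(c) ⊊ Des(c')` and `g_c = g_{c'}` (equivalently, the associated words
coincide). -/
theorem stmt1 {m : ℕ} (n : ℕ) (c c' : List (Fin m → ℕ))
    (hc : ∀ col ∈ c, col ≠ 0) (hc' : ∀ col ∈ c', col ≠ 0)
    (hn : (wordOf m c).length = n) (hn' : (wordOf m c').length = n) :
    Relation.TransGen (SplitRel m) c c' ↔
      DesSet m c ⊂ DesSet m c' ∧ wordOf m c = wordOf m c' := by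
  constructor
  · intro h
    obtain ⟨hw, -, hss⟩ := transGen_forward h hc
    exact ⟨hss, hw⟩
  · rintro ⟨hss, hw⟩
    exact backward c' hc' _ c hc hw hss le_rfl
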